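/- arXiv:2107.11690 — 8 statements merged into one kernel-verified Lean document; each statement's English description precedes it below -/
import Mathlib

section
/- The limit x_∞ = lim_{t→∞} x(t) of a solution of the uncontrolled SIR system x' = -γσ₀xy, y' = γσ₀xy - γy with initial condition (x₀, y₀), x₀ > 0, y₀ > 0, satisfies x_∞ < 1/σ₀. -/
/-- The long-time limit x_∞ of the uncontrolled SIR system satisfies x_∞ < 1/σ₀. -/
theorem sir_limit_lt_inv_sigma (γ σ₀ : ℝ) (hγ : 0 < γ) (hσ₀ : 0 < σ₀)
    (x y : ℝ → ℝ) (hx0 : 0 < x 0) (hy0 : 0 < y 0)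
    (hx : ∀ t ∈ Set.Ici (0:ℝ), HasDerivAt x (-(γ * σ₀ * x t * y t)) t)
    (hy : ∀ t ∈ Set.Ici (0:ℝ), HasDerivAt y (γ * σ₀ * x t * y t - γ * y t) t)
    (hpos : ∀ t ∈ Set.Ici (0:ℝ), 0 < x t ∧ 0 < y t)
    (hanti : AntitoneOn x (Set.Ici 0))
    (xinf : ℝ)
    (hxlim : Filter.Tendsto x Filter.atTop (nhds xinf))
    (hylim : Filter.Tendsto y Filter.atTop (nhds 0))
    (hcons : ∀ s t : ℝ, 0 ≤ s → 0 ≤ t →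
      x s * Real.exp (-σ₀ * (x s + y s)) = x t * Real.exp (-σ₀ * (x t + y t))) :
    xinf < 1 / σ₀ := by
  by_contra h
  push_neg at h
  -- x t ≥ xinf for all t ≥ 0
  have hxge : ∀ t : ℝ, 0 ≤ t → xinf ≤ x t := by
    intro t ht
    refine le_of_tendsto hxlim ?_
    filter_upwards [Filter.eventually_ge_atTop t] with s hs
    exact hanti ht (le_trans ht hs) hs
  -- hence σ₀ * x t ≥ 1
  have hone : ∀ t : ℝ, 0 ≤ t → 1 ≤ σ₀ * x t := by
    intro t ht
    have : 1 / σ₀ ≤ x t := le_trans h (hxge t ht)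
    calc 1 = σ₀ * (1 / σ₀) := by field_simp
    _ ≤ σ₀ * x t := by nlinarith
  -- y is monotone on Ici 0
  have hmono : MonotoneOn y (Set.Ici (0:ℝ)) := by
    apply monotoneOn_of_deriv_nonneg (convex_Ici 0)
    · exact fun t ht => (hy t ht).continuousAt.continuousWithinAt
    · intro t ht
      rw [interior_Ici] at ht
      exact ((hy t (Set.mem_Ici.mpr (le_of_lt ht))).differentiableAt).differentiableWithinAt
    · intro t ht
      rw [interior_Ici] at ht
      have ht' : (0:ℝ) ≤ t := le_of_lt ht
      rw [(hy t ht').deriv]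
      have hyt : 0 < y t := (hpos t ht').2
      have h1 := hone t ht'
      nlinarith [mul_nonneg (mul_pos hγ hyt).le (by linarith : (0:ℝ) ≤ σ₀ * x t - 1)]
  -- y 0 ≤ y t for all t ≥ 0, and y → 0, so y 0 ≤ 0
  have : y 0 ≤ 0 := by
    refine ge_of_tendsto hylim ?_
    filter_upwards [Filter.eventually_ge_atTop (0:ℝ)] with s hs
    exact hmono (Set.mem_Ici.mpr le_rfl) hs hs
  linarith
end

section
/- The partial derivative of x_∞(x, y, σ₀) with respect to x equals ((1 - σ₀x)/x) · x_∞/(1 - σ₀x_∞), and the partial derivative with respect to y equals -σ₀ x_∞/(1 - σ₀ x_∞). -/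
open Real Filter Set Topology

private noncomputable def Fn (σ₀ : ℝ) (u : ℝ) : ℝ := u * Real.exp (-σ₀ * u)

private lemma Fn_hasDerivAt (σ₀ u : ℝ) :
    HasDerivAt (Fn σ₀) ((1 - σ₀ * u) * Real.exp (-σ₀ * u)) u := by
  have h1 : HasDerivAt (fun v : ℝ => Real.exp (-σ₀ * v)) (-σ₀ * Real.exp (-σ₀ * u)) u := by
    simpa [mul_comm] using (((hasDerivAt_id u).const_mul (-σ₀)).exp)
  have h := (hasDerivAt_id u).mul h1
  refine h.congr_deriv ?_
  simp only [id_eq]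
  ring

private lemma Fn_cont (σ₀ : ℝ) : Continuous (Fn σ₀) := by
  unfold Fn; continuity

private lemma Fn_mono (σ₀ : ℝ) (hσ₀ : 0 < σ₀) : StrictMonoOn (Fn σ₀) (Iic (1/σ₀)) := by
  apply strictMonoOn_of_deriv_pos (convex_Iic _) (Fn_cont σ₀).continuousOn
  intro u hu
  rw [interior_Iic] at hu
  rw [(Fn_hasDerivAt σ₀ u).deriv]
  have : σ₀ * u < 1 := by rw [mul_comm]; exact (lt_div_iff₀ hσ₀).mp hu
  exact mul_pos (by linarith) (Real.exp_pos _)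

private lemma Fn_anti (σ₀ : ℝ) (hσ₀ : 0 < σ₀) : StrictAntiOn (Fn σ₀) (Ici (1/σ₀)) := by
  apply strictAntiOn_of_deriv_neg (convex_Ici _) (Fn_cont σ₀).continuousOn
  intro u hu
  rw [interior_Ici] at hu
  rw [(Fn_hasDerivAt σ₀ u).deriv]
  have : 1 < σ₀ * u := by rw [mul_comm]; exact (div_lt_iff₀ hσ₀).mp hu
  exact mul_neg_of_neg_of_pos (by linarith) (Real.exp_pos _)

private lemma Fn_ne (σ₀ : ℝ) (hσ₀ : 0 < σ₀) (x : ℝ) :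
    ∀ᶠ x' in 𝓝[≠] x, Fn σ₀ x' ≠ Fn σ₀ x := by
  rcases lt_trichotomy x (1/σ₀) with h | h | h
  · have hm : Iio (1/σ₀) ∈ 𝓝[≠] x := nhdsWithin_le_nhds (isOpen_Iio.mem_nhds h)
    filter_upwards [hm, self_mem_nhdsWithin] with x' h1 h2
    exact fun he => h2 ((Fn_mono σ₀ hσ₀).injOn (Iio_subset_Iic_self h1) (mem_Iic.mpr h.le) he)
  · filter_upwards [self_mem_nhdsWithin] with x' h2
    rcases lt_or_gt_of_ne (h2 : x' ≠ x) with hlt | hgt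
    · exact ne_of_lt ((Fn_mono σ₀ hσ₀) (mem_Iic.mpr (hlt.le.trans h.le)) (mem_Iic.mpr h.le) hlt)
    · exact ne_of_lt ((Fn_anti σ₀ hσ₀) (mem_Ici.mpr h.ge) (mem_Ici.mpr (h.ge.trans hgt.le)) hgt)
  · have hm : Ioi (1/σ₀) ∈ 𝓝[≠] x := nhdsWithin_le_nhds (isOpen_Ioi.mem_nhds h)
    filter_upwards [hm, self_mem_nhdsWithin] with x' h1 h2
    exact fun he => h2 ((Fn_anti σ₀ hσ₀).injOn (Ioi_subset_Ici_self h1) (mem_Ici.mpr h.le) he)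

private lemma xinf_key (σ₀ : ℝ) (hσ₀ : 0 < σ₀) (g H : ℝ → ℝ) (t H' : ℝ)
    (hg : ∀ᶠ t' in 𝓝 t, g t' ∈ Set.Ioo 0 (1/σ₀) ∧
      g t' * Real.exp (-σ₀ * g t') = H t')
    (hH : HasDerivAt H H' t)
    (hne : ∀ᶠ t' in 𝓝[≠] t, H t' ≠ H t) :
    HasDerivAt g (H' / ((1 - σ₀ * g t) * Real.exp (-σ₀ * g t))) t := by
  have hu₀ := hg.self_of_nhds
  have hu₀mem : g t ∈ Icc 0 (1/σ₀) := Ioo_subset_Icc_self hu₀.1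
  have hu₀eq : Fn σ₀ (g t) = H t := hu₀.2
  have hsmIcc : StrictMonoOn (Fn σ₀) (Icc 0 (1/σ₀)) :=
    (Fn_mono σ₀ hσ₀).mono Icc_subset_Iic_self
  have hmonoIcc : MonotoneOn (Fn σ₀) (Icc 0 (1/σ₀)) := hsmIcc.monotoneOn
  -- continuity of g at t
  have hcg : ContinuousAt g t := by
    rw [ContinuousAt, tendsto_order]
    constructor
    · intro a ha
      rcases le_or_gt a 0 with h0 | h0
      · filter_upwards [hg] with t' ht'
        exact lt_of_le_of_lt h0 ht'.1.1
      · have haI : a ∈ Icc 0 (1/σ₀) := ⟨h0.le, ha.le.trans hu₀mem.2⟩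
        have hFa : Fn σ₀ a < H t := by
          rw [← hu₀eq]; exact hsmIcc haI hu₀mem ha
        filter_upwards [hg, hH.continuousAt.eventually_const_lt hFa] with t' ht' hlt
        by_contra hle
        push_neg at hle
        have hle2 : Fn σ₀ (g t') ≤ Fn σ₀ a :=
          hmonoIcc (Ioo_subset_Icc_self ht'.1) haI hle
        have : Fn σ₀ (g t') = H t' := ht'.2
        linarith
    · intro b hb
      rcases le_or_gt (1/σ₀) b with h0 | h0
      · filter_upwards [hg] with t' ht'
        exact lt_of_lt_of_le ht'.1.2 h0
      · have hbI : b ∈ Icc 0 (1/σ₀) := ⟨(hu₀.1.1.trans hb).le, h0.le⟩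
        have hFb : H t < Fn σ₀ b := by
          rw [← hu₀eq]; exact hsmIcc hu₀mem hbI hb
        filter_upwards [hg, hH.continuousAt.eventually_lt_const hFb] with t' ht' hlt
        by_contra hle
        push_neg at hle
        have hle2 : Fn σ₀ b ≤ Fn σ₀ (g t') :=
          hmonoIcc hbI (Ioo_subset_Icc_self ht'.1) hle
        have : Fn σ₀ (g t') = H t' := ht'.2
        linarith
  -- eventually g t' ≠ g t
  have hgne : ∀ᶠ t' in 𝓝[≠] t, g t' ≠ g t := by
    filter_upwards [hne, hg.filter_mono nhdsWithin_le_nhds] with t' h1 h2 h3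
    apply h1
    have : Fn σ₀ (g t') = H t' := h2.2
    rw [← this, h3, hu₀eq]
  -- nonvanishing of F'
  have h1pos : 0 < 1 - σ₀ * g t := by
    have : σ₀ * g t < 1 := by rw [mul_comm]; exact (lt_div_iff₀ hσ₀).mp hu₀.1.2
    linarith
  have hF'ne : (1 - σ₀ * g t) * Real.exp (-σ₀ * g t) ≠ 0 :=
    ne_of_gt (mul_pos h1pos (Real.exp_pos _))
  -- slope identity
  have hslope : ∀ᶠ t' in 𝓝[≠] t,
      slope H t t' / slope (Fn σ₀) (g t) (g t') = slope g t t' := by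
    filter_upwards [hgne, hne, hg.filter_mono nhdsWithin_le_nhds, self_mem_nhdsWithin]
      with t' h1 h2 h3 h4
    have ht : t' - t ≠ 0 := sub_ne_zero.mpr h4
    have hgd : g t' - g t ≠ 0 := sub_ne_zero.mpr h1
    have hHd : H t' - H t ≠ 0 := sub_ne_zero.mpr h2
    have e1 : Fn σ₀ (g t') = H t' := h3.2
    rw [slope_def_field, slope_def_field, slope_def_field, e1, hu₀eq]
    field_simp
  -- tendsto of slopes
  have hT1 : Tendsto (slope H t) (𝓝[≠] t) (𝓝 H') := hasDerivAt_iff_tendsto_slope.mp hH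
  have hgt : Tendsto g (𝓝[≠] t) (𝓝[≠] (g t)) := by
    rw [tendsto_nhdsWithin_iff]
    exact ⟨hcg.tendsto.mono_left nhdsWithin_le_nhds, hgne⟩
  have hT2 : Tendsto (fun t' => slope (Fn σ₀) (g t) (g t')) (𝓝[≠] t)
      (𝓝 ((1 - σ₀ * g t) * Real.exp (-σ₀ * g t))) :=
    (hasDerivAt_iff_tendsto_slope.mp (Fn_hasDerivAt σ₀ (g t))).comp hgt
  have hT3 := hT1.div hT2 hF'ne
  rw [hasDerivAt_iff_tendsto_slope]
  exact hT3.congr' hslope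

/-- Partial derivatives of x_∞(x,y,σ₀) with respect to x and y. -/
theorem xinf_partial_derivatives (σ₀ : ℝ) (hσ₀ : 0 < σ₀)
    (xinf : ℝ → ℝ → ℝ)
    (hdef : ∀ x y : ℝ, 0 < x → 0 < y →
      xinf x y ∈ Set.Ioo 0 (1/σ₀) ∧
      xinf x y * Real.exp (-σ₀ * xinf x y) = x * Real.exp (-σ₀ * (x + y)))
    (x y : ℝ) (hx : 0 < x) (hy : 0 < y) :
    HasDerivAt (fun x' => xinf x' y)
      ((1 - σ₀ * x) / x * (xinf x y / (1 - σ₀ * xinf x y))) x ∧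
    HasDerivAt (fun y' => xinf x y')
      (-(σ₀ * xinf x y) / (1 - σ₀ * xinf x y)) y := by
  obtain ⟨hmem, heq⟩ := hdef x y hx hy
  have hxne : x ≠ 0 := ne_of_gt hx
  have h1pos : 0 < 1 - σ₀ * xinf x y := by
    have : σ₀ * xinf x y < 1 := by rw [mul_comm]; exact (lt_div_iff₀ hσ₀).mp hmem.2
    linarith
  have h1ne : (1 : ℝ) - σ₀ * xinf x y ≠ 0 := ne_of_gt h1pos
  have hexp1 : Real.exp (-σ₀ * xinf x y) ≠ 0 := Real.exp_ne_zero _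
  have hexp2 : Real.exp (-σ₀ * (x + y)) ≠ 0 := Real.exp_ne_zero _
  constructor
  · -- derivative in x
    have hH : HasDerivAt (fun x' => x' * Real.exp (-σ₀ * (x' + y)))
        ((1 - σ₀ * x) * Real.exp (-σ₀ * (x + y))) x := by
      have h1 : HasDerivAt (fun x' : ℝ => Real.exp (-σ₀ * (x' + y)))
          (-σ₀ * Real.exp (-σ₀ * (x + y))) x := by
        have := (((hasDerivAt_id x).add_const y).const_mul (-σ₀)).exp
        simpa [mul_comm] using this
      have h := (hasDerivAt_id x).mul h1
      refine h.congr_deriv ?_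
      simp only [id_eq]
      ring
    have hne : ∀ᶠ x' in 𝓝[≠] x,
        x' * Real.exp (-σ₀ * (x' + y)) ≠ x * Real.exp (-σ₀ * (x + y)) := by
      filter_upwards [Fn_ne σ₀ hσ₀ x] with x' h1 h2
      apply h1
      have key : ∀ z : ℝ, z * Real.exp (-σ₀ * (z + y)) =
          Fn σ₀ z * Real.exp (-σ₀ * y) := by
        intro z
        rw [Fn, mul_assoc, ← Real.exp_add]
        ring_nf
      rw [key, key] at h2
      exact mul_right_cancel₀ (Real.exp_ne_zero _) h2
    have hg : ∀ᶠ x' in 𝓝 x, xinf x' y ∈ Set.Ioo 0 (1/σ₀) ∧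
        xinf x' y * Real.exp (-σ₀ * xinf x' y) = x' * Real.exp (-σ₀ * (x' + y)) := by
      filter_upwards [eventually_gt_nhds hx] with x' hx'
      exact hdef x' y hx' hy
    have hd := xinf_key σ₀ hσ₀ (fun x' => xinf x' y)
      (fun x' => x' * Real.exp (-σ₀ * (x' + y))) x
      ((1 - σ₀ * x) * Real.exp (-σ₀ * (x + y))) hg hH hne
    convert hd using 1
    rw [div_mul_div_comm, div_eq_div_iff (by positivity) (ne_of_gt (mul_pos h1pos (Real.exp_pos _)))]
    linear_combination ((1 - σ₀ * x) * (1 - σ₀ * xinf x y)) * heq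
  · -- derivative in y
    have hH : HasDerivAt (fun y' => x * Real.exp (-σ₀ * (x + y')))
        (-σ₀ * x * Real.exp (-σ₀ * (x + y))) y := by
      have h1 : HasDerivAt (fun y' : ℝ => Real.exp (-σ₀ * (x + y')))
          (-σ₀ * Real.exp (-σ₀ * (x + y))) y := by
        have := ((((hasDerivAt_id y).const_add x)).const_mul (-σ₀)).exp
        simpa [mul_comm] using this
      have h := h1.const_mul x
      refine h.congr_deriv ?_
      ring
    have hne : ∀ᶠ y' in 𝓝[≠] y,
        x * Real.exp (-σ₀ * (x + y')) ≠ x * Real.exp (-σ₀ * (x + y)) := by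
      filter_upwards [self_mem_nhdsWithin] with y' h2 h3
      apply h2
      have h4 := Real.exp_eq_exp.mp (mul_left_cancel₀ hxne h3)
      have h5 : σ₀ * y' = σ₀ * y := by linarith
      exact mul_left_cancel₀ (ne_of_gt hσ₀) h5
    have hg : ∀ᶠ y' in 𝓝 y, xinf x y' ∈ Set.Ioo 0 (1/σ₀) ∧
        xinf x y' * Real.exp (-σ₀ * xinf x y') = x * Real.exp (-σ₀ * (x + y')) := by
      filter_upwards [eventually_gt_nhds hy] with y' hy'
      exact hdef x y' hx hy'
    have hd := xinf_key σ₀ hσ₀ (fun y' => xinf x y')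
      (fun y' => x * Real.exp (-σ₀ * (x + y'))) y
      (-σ₀ * x * Real.exp (-σ₀ * (x + y))) hg hH hne
    convert hd using 1
    rw [div_eq_div_iff h1ne (ne_of_gt (mul_pos h1pos (Real.exp_pos _)))]
    linear_combination (-σ₀ * (1 - σ₀ * xinf x y)) * heq
end

section
/- For any admissible trajectory of the controlled SIR system with σ(t) ∈ [σ₁, σ₂] ⊆ [0, σ₀], the map t ↦ x_∞(x(t), y(t), σ₀) is nondecreasing; in particular x_∞(x₀, y₀, σ₀) ≤ x_∞(x(T), y(T), σ₀) < 1/σ₀. -/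
/-- Along any admissible trajectory of the controlled SIR system with σ(t) ∈ [σ₁,σ₂] ⊆ [0,σ₀],
t ↦ x_∞(x(t),y(t),σ₀) is nondecreasing; in particular
x_∞(x₀,y₀,σ₀) ≤ x_∞(x(T),y(T),σ₀) < 1/σ₀. -/
theorem xinf_monotone_along_trajectory (γ σ₀ σ₁ σ₂ T : ℝ) (hγ : 0 < γ) (hσ₀ : 0 < σ₀)
    (h1 : 0 ≤ σ₁) (h12 : σ₁ ≤ σ₂) (h2 : σ₂ ≤ σ₀) (hT : 0 < T)
    (σ x y : ℝ → ℝ)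
    (hσrange : ∀ t ∈ Set.Icc (0:ℝ) T, σ t ∈ Set.Icc σ₁ σ₂)
    (x₀ y₀ : ℝ) (hx0 : x 0 = x₀) (hy0 : y 0 = y₀)
    (hD : 0 < x₀ ∧ 0 < y₀ ∧ x₀ + y₀ ≤ 1)
    (hx : ∀ t ∈ Set.Icc (0:ℝ) T, HasDerivAt x (-(γ * σ t * x t * y t)) t)
    (hy : ∀ t ∈ Set.Icc (0:ℝ) T, HasDerivAt y (γ * σ t * x t * y t - γ * y t) t)
    (hpos : ∀ t ∈ Set.Icc (0:ℝ) T, 0 < x t ∧ 0 < y t)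
    (xinf : ℝ → ℝ → ℝ)
    (hdef : ∀ a b : ℝ, 0 < a → 0 < b →
      xinf a b ∈ Set.Ioo 0 (1/σ₀) ∧
      xinf a b * Real.exp (-σ₀ * xinf a b) = a * Real.exp (-σ₀ * (a + b))) :
    MonotoneOn (fun t => xinf (x t) (y t)) (Set.Icc 0 T) ∧
    xinf x₀ y₀ ≤ xinf (x T) (y T) ∧ xinf (x T) (y T) < 1/σ₀ := by

  obtain ⟨hx0p, hy0p, hsum⟩ := hD
  -- f u = u * exp(-σ₀ u) is strictly monotone on [0, 1/σ₀]
  set f : ℝ → ℝ := fun u => u * Real.exp (-σ₀ * u) with hfdef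
  have hfderiv : ∀ u : ℝ, HasDerivAt f ((1 - σ₀ * u) * Real.exp (-σ₀ * u)) u := by
    intro u
    have h1 : HasDerivAt (fun u : ℝ => -σ₀ * u) (-σ₀) u := by
      simpa using (hasDerivAt_id u).const_mul (-σ₀)
    have h2 := h1.exp
    have h3 := (hasDerivAt_id u).mul h2
    refine h3.congr_deriv ?_
    simp
    ring
  have hfmono : StrictMonoOn f (Set.Icc 0 (1/σ₀)) := by
    apply strictMonoOn_of_deriv_pos (convex_Icc _ _)
    · exact fun u _ => ((hfderiv u).continuousAt).continuousWithinAt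
    · intro u hu
      rw [interior_Icc] at hu
      rw [(hfderiv u).deriv]
      have h4 : σ₀ * u < 1 := by
        have := hu.2
        rw [mul_comm]
        calc u * σ₀ < (1/σ₀) * σ₀ := by
              exact mul_lt_mul_of_pos_right this hσ₀
          _ = 1 := by field_simp
      have h5 : 0 < 1 - σ₀ * u := by linarith
      positivity
  -- g t = x t * exp(-σ₀(x t + y t)) is nondecreasing
  set g : ℝ → ℝ := fun t => x t * Real.exp (-σ₀ * (x t + y t)) with hgdef
  have hg : ∀ t ∈ Set.Icc (0:ℝ) T,
      HasDerivAt g (Real.exp (-σ₀ * (x t + y t)) * (γ * x t * y t * (σ₀ - σ t))) t := by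
    intro t ht
    have hxy := (hx t ht).add (hy t ht)
    have h1 := hxy.const_mul (-σ₀)
    have h2 := h1.exp
    have h3 := (hx t ht).mul h2
    refine h3.congr_deriv ?_
    simp only [Pi.add_apply]
    ring
  have hgmono : MonotoneOn g (Set.Icc 0 T) := by
    apply monotoneOn_of_deriv_nonneg (convex_Icc _ _)
    · exact fun t ht => ((hg t ht).continuousAt).continuousWithinAt
    · intro t ht
      rw [interior_Icc] at ht
      exact ((hg t (Set.mem_Icc_of_Ioo ht)).differentiableAt).differentiableWithinAt
    · intro t ht
      rw [interior_Icc] at ht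
      have ht' := Set.mem_Icc_of_Ioo ht
      rw [(hg t ht').deriv]
      obtain ⟨hxp, hyp⟩ := hpos t ht'
      have hσt : σ t ≤ σ₀ := le_trans (hσrange t ht').2 h2
      have h6 : 0 ≤ σ₀ - σ t := by linarith
      have h7 : (0:ℝ) ≤ γ * x t * y t * (σ₀ - σ t) := by positivity
      exact mul_nonneg (Real.exp_pos _).le h7
  -- key relation: f (xinf (x t) (y t)) = g t, and xinf values in Icc 0 (1/σ₀)
  have hkey : ∀ t ∈ Set.Icc (0:ℝ) T,
      f (xinf (x t) (y t)) = g t ∧ xinf (x t) (y t) ∈ Set.Icc 0 (1/σ₀) := by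
    intro t ht
    obtain ⟨hxp, hyp⟩ := hpos t ht
    obtain ⟨hmem, heq⟩ := hdef (x t) (y t) hxp hyp
    exact ⟨heq, ⟨hmem.1.le, hmem.2.le⟩⟩
  have hmono : MonotoneOn (fun t => xinf (x t) (y t)) (Set.Icc 0 T) := by
    intro s hs t ht hst
    obtain ⟨heqs, hmems⟩ := hkey s hs
    obtain ⟨heqt, hmemt⟩ := hkey t ht
    have := hgmono hs ht hst
    rw [← heqs, ← heqt] at this
    exact (hfmono.le_iff_le hmems hmemt).mp this
  refine ⟨hmono, ?_, ?_⟩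
  · have h0 : (0:ℝ) ∈ Set.Icc (0:ℝ) T := ⟨le_refl _, hT.le⟩
    have hTm : T ∈ Set.Icc (0:ℝ) T := ⟨hT.le, le_refl _⟩
    have := hmono h0 hTm hT.le
    simpa [hx0, hy0] using this
  · have hTm : T ∈ Set.Icc (0:ℝ) T := ⟨hT.le, le_refl _⟩
    obtain ⟨hxp, hyp⟩ := hpos T hTm
    exact (hdef (x T) (y T) hxp hyp).1.2
end

section
/- Under the adjoint dynamics, a solution (λ₁(t), λ₂(t)) of the adjoint system satisfying the constancy-of-Hamiltonian condition σ*(t)φ(t) - γλ₂(t)y(t) = C cannot cross both semilines {λ₁ = λ₂ > 0} and {λ₁ = λ₂ < 0} on [0,T]. -/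
/-- A solution of the adjoint system satisfying the constancy-of-Hamiltonian condition cannot
cross both semilines {λ₁ = λ₂ > 0} and {λ₁ = λ₂ < 0} on [0,T]. -/
theorem adjoint_cannot_cross_both_semilines (γ σ₁ σ₂ κ lam₃T C T : ℝ)
    (hγ : 0 < γ) (h12 : σ₁ < σ₂) (hκl : 0 ≤ κ + lam₃T) (hT : 0 < T)
    (σ x y lam₁ lam₂ : ℝ → ℝ)
    (hpos : ∀ t ∈ Set.Icc (0:ℝ) T, 0 < x t ∧ 0 < y t)
    (hσrange : ∀ t ∈ Set.Icc (0:ℝ) T, σ t ∈ Set.Icc σ₁ σ₂)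
    (hlam1 : ∀ t ∈ Set.Icc (0:ℝ) T,
      HasDerivAt lam₁ ((lam₁ t - lam₂ t) * γ * σ t * y t) t)
    (hlam2 : ∀ t ∈ Set.Icc (0:ℝ) T,
      HasDerivAt lam₂ ((lam₁ t - lam₂ t) * γ * σ t * x t + γ * lam₂ t) t)
    (hbb : ∀ t ∈ Set.Icc (0:ℝ) T,
      (0 < κ + lam₃T + γ * x t * y t * (lam₂ t - lam₁ t) → σ t = σ₂) ∧
      (κ + lam₃T + γ * x t * y t * (lam₂ t - lam₁ t) < 0 → σ t = σ₁))
    (hham : ∀ t ∈ Set.Icc (0:ℝ) T,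
      σ t * (κ + lam₃T + γ * x t * y t * (lam₂ t - lam₁ t)) - γ * lam₂ t * y t = C) :
    ¬ ∃ s₁ ∈ Set.Icc (0:ℝ) T, ∃ s₂ ∈ Set.Icc (0:ℝ) T,
      (lam₁ s₁ = lam₂ s₁ ∧ 0 < lam₂ s₁) ∧ (lam₁ s₂ = lam₂ s₂ ∧ lam₂ s₂ < 0) := by
  rintro ⟨s₁, hs₁, s₂, hs₂, ⟨he₁, hp₁⟩, he₂, hn₂⟩
  have key : ∀ s ∈ Set.Icc (0:ℝ) T, lam₁ s = lam₂ s →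
      σ₂ * (κ + lam₃T) - γ * lam₂ s * y s = C := by
    intro s hs he
    have h0 : γ * x s * y s * (lam₂ s - lam₁ s) = 0 := by rw [he]; ring
    have hh := hham s hs
    rw [h0, add_zero] at hh
    rcases eq_or_lt_of_le hκl with hK | hK
    · rw [← hK] at hh ⊢
      simpa using hh
    · have hσ : σ s = σ₂ := (hbb s hs).1 (by rw [h0, add_zero]; exact hK)
      rw [hσ] at hh
      exact hh
  have k1 := key s₁ hs₁ he₁
  have k2 := key s₂ hs₂ he₂
  have hy1 := (hpos s₁ hs₁).2
  have hy2 := (hpos s₂ hs₂).2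
  nlinarith [mul_pos (mul_pos hγ hp₁) hy1, mul_pos (mul_pos hγ (neg_pos.mpr hn₂)) hy2]
end

section
/- Let σ* be an optimal control on [0,T] with σ*(t) = σ₂ on [T-δ, T] for some δ > 0, and suppose κ(1 - σ₀x_∞) < γ y*(T) x_∞ where x_∞ = x_∞(x*(T), y*(T), σ₀). Then ∫₀ᵀ σ*(t) dt = σ₁τ + σ₂(T - τ), i.e. the isoperimetric constraint is active. -/
/-- If an optimal control equals σ₂ on a final interval [T-δ,T] and
κ(1-σ₀x_∞) < γ y*(T) x_∞, then the isoperimetric constraint is active: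
∫₀ᵀ σ* = σ₁τ + σ₂(T-τ). -/
theorem isoperimetric_constraint_active (γ σ₀ σ₁ σ₂ κ τ T δ β xinfv : ℝ)
    (hγ : 0 < γ) (hσ₀ : 0 < σ₀) (h12 : σ₁ < σ₂) (hκ : 0 ≤ κ)
    (hτ : 0 < τ) (hτT : τ < T) (hδ : 0 < δ) (hδT : δ ≤ T)
    (hxinf : xinfv ∈ Set.Ioo 0 (1/σ₀))
    (σ y : ℝ → ℝ)
    (hyT : 0 < y T)
    (hκbound : κ * (1 - σ₀ * xinfv) < γ * y T * xinfv)
    (hσ2 : ∀ t ∈ Set.Icc (T - δ) T, σ t = σ₂)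
    (hβ : 0 ≤ β)
    (hcs : β * ((∫ t in (0:ℝ)..T, σ t) - (σ₂ * (T - τ) + σ₁ * τ)) = 0)
    (hconstr : (∫ t in (0:ℝ)..T, σ t) ≥ σ₁ * τ + σ₂ * (T - τ))
    (hsign : κ + β - γ * y T * xinfv / (1 - σ₀ * xinfv) < 0 → σ T = σ₁) :
    (∫ t in (0:ℝ)..T, σ t) = σ₁ * τ + σ₂ * (T - τ) := by
  have h1 : 0 < 1 - σ₀ * xinfv := by
    have := hxinf.2
    have : σ₀ * xinfv < 1 := by
      rw [div_eq_inv_mul, mul_one] at this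
      calc σ₀ * xinfv < σ₀ * σ₀⁻¹ := by
            exact mul_lt_mul_of_pos_left this hσ₀
        _ = 1 := mul_inv_cancel₀ hσ₀.ne'
    linarith
  rcases eq_or_lt_of_le hβ with hb0 | hbpos
  · exfalso
    have hlt : κ + β - γ * y T * xinfv / (1 - σ₀ * xinfv) < 0 := by
      rw [← hb0, add_zero, sub_neg]
      rw [lt_div_iff₀ h1]
      linarith
    have hT1 : σ T = σ₁ := hsign hlt
    have hT2 : σ T = σ₂ := hσ2 T ⟨by linarith, le_refl T⟩
    linarith [hT1 ▸ hT2]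
  · have := mul_eq_zero.mp hcs
    rcases this with h | h
    · exact absurd h hbpos.ne'
    · linarith
end

section
/- For i = 1, 2 and s in [t_i, t_{i+1}], the sensitivity u_i(s) = ∂Ψ₁/∂x_i − ∂Ψ₁/∂y_i of the SIR flow with constant control σ_i satisfies u_i(s) = x(s)/x_i + γσ_i (x(s)y(s)/x_i) ∫_{t_i}^{s} x(r)/y(r) dr, and u_i(s) + v_i(s) = (y(s)/x_i) γ ∫_{t_i}^{s} x(r)/y(r) dr, where v_i(s) = ∂Ψ₂/∂x_i − ∂Ψ₂/∂y_i. -/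
open Set Filter Topology MeasureTheory intervalIntegral Asymptotics


open Set Filter Topology MeasureTheory intervalIntegral Asymptotics

lemma mov_endpoint {F : ℝ → ℝ → ℝ} {U : Set (ℝ × ℝ)} (hU : IsOpen U)
    (hF : ContinuousOn (fun p : ℝ × ℝ => F p.1 p.2) U)
    {e C : ℝ → ℝ} {a₀ e' x₀ c₀ : ℝ} (hmem : (x₀, c₀) ∈ U)
    (he : HasDerivAt e e' a₀) (hex : e a₀ = x₀)
    (hC : ContinuousAt C a₀) (hCc : C a₀ = c₀) :
    HasDerivAt (fun a => ∫ τ in x₀..(e a), F τ (C a)) (F x₀ c₀ * e') a₀ := by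
  have hcont : ContinuousAt (fun p : ℝ × ℝ => F p.1 p.2) (x₀, c₀) :=
    hF.continuousAt (hU.mem_nhds hmem)
  have hO : (fun a => e a - x₀) =O[𝓝 a₀] fun a => a - a₀ := by
    simpa [hex] using he.hasFDerivAt.isBigO_sub
  have hlo : (fun a => (∫ τ in x₀..e a, F τ (C a)) - F x₀ c₀ * (e a - x₀))
      =o[𝓝 a₀] fun a => e a - x₀ := by
    rw [isLittleO_iff]
    intro c hc
    have hev : ∀ᶠ p : ℝ × ℝ in 𝓝 (x₀, c₀), p ∈ U ∧ dist (F p.1 p.2) (F x₀ c₀) ≤ c := by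
      have h1 : ∀ᶠ p : ℝ × ℝ in 𝓝 (x₀, c₀), p ∈ U := hU.mem_nhds hmem
      have h2 : ∀ᶠ p : ℝ × ℝ in 𝓝 (x₀, c₀), dist (F p.1 p.2) (F x₀ c₀) ≤ c :=
        hcont (Metric.closedBall_mem_nhds _ hc)
      exact h1.and h2
    rw [Metric.eventually_nhds_iff] at hev
    obtain ⟨ε, hε, hball⟩ := hev
    have heva : ∀ᶠ a in 𝓝 a₀, dist (e a) x₀ < ε ∧ dist (C a) c₀ < ε := by
      have h1 : Tendsto e (𝓝 a₀) (𝓝 x₀) := hex ▸ he.continuousAt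
      have h2 : Tendsto C (𝓝 a₀) (𝓝 c₀) := hCc ▸ hC
      have e1 : ∀ᶠ a in 𝓝 a₀, e a ∈ Metric.ball x₀ ε := h1.eventually (Metric.ball_mem_nhds _ hε)
      have e2 : ∀ᶠ a in 𝓝 a₀, C a ∈ Metric.ball c₀ ε := h2.eventually (Metric.ball_mem_nhds _ hε)
      filter_upwards [e1, e2] with a hh1 hh2
      exact ⟨hh1, hh2⟩
    filter_upwards [heva] with a ⟨ha1, ha2⟩
    have hkey : ∀ τ ∈ uIcc x₀ (e a), (τ, C a) ∈ U ∧ dist (F τ (C a)) (F x₀ c₀) ≤ c := by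
      intro τ hτ
      apply hball
      rw [Prod.dist_eq]
      have : dist τ x₀ ≤ dist (e a) x₀ := by
        rw [Real.dist_eq, Real.dist_eq]
        rcases le_total x₀ (e a) with h | h
        · rw [uIcc_of_le h] at hτ
          rw [abs_of_nonneg (by linarith [hτ.1]), abs_of_nonneg (by linarith)]
          linarith [hτ.2]
        · rw [uIcc_of_ge h] at hτ
          rw [abs_of_nonpos (by linarith [hτ.2]), abs_of_nonpos (by linarith)]
          linarith [hτ.1]
      simp only [sup_lt_iff]
      exact ⟨lt_of_le_of_lt this ha1, ha2⟩
    have hci : ContinuousOn (fun τ => F τ (C a)) (uIcc x₀ (e a)) := by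
      intro τ hτ
      have hf2 : ContinuousAt (fun τ : ℝ => (τ, C a)) τ :=
        (continuous_id.prodMk continuous_const).continuousAt
      have := ContinuousAt.comp (f := fun τ : ℝ => (τ, C a))
        (hF.continuousAt (hU.mem_nhds (hkey τ hτ).1)) hf2
      exact this.continuousWithinAt
    have hint : IntervalIntegrable (fun τ => F τ (C a)) volume x₀ (e a) :=
      hci.intervalIntegrable
    have heq : (∫ τ in x₀..e a, F τ (C a)) - F x₀ c₀ * (e a - x₀)
        = ∫ τ in x₀..e a, (F τ (C a) - F x₀ c₀) := by
      rw [intervalIntegral.integral_sub hint intervalIntegrable_const,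
        intervalIntegral.integral_const, smul_eq_mul, mul_comm]
    rw [heq]
    have hbd : ‖∫ τ in x₀..e a, (F τ (C a) - F x₀ c₀)‖ ≤ c * |e a - x₀| := by
      apply intervalIntegral.norm_integral_le_of_norm_le_const
      intro τ hτ
      have := (hkey τ (uIoc_subset_uIcc hτ)).2
      rwa [Real.dist_eq] at this
    simpa [Real.norm_eq_abs] using hbd
  have h1 : HasDerivAt (fun a => F x₀ c₀ * (e a - x₀)) (F x₀ c₀ * e') a₀ :=
    (he.sub_const x₀).const_mul _
  rw [hasDerivAt_iff_isLittleO] at h1 ⊢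
  have h2 := hlo.trans_isBigO hO
  have h3 := h1.add h2
  refine h3.congr' (Eventually.of_forall fun a => ?_) (Eventually.of_forall fun a => rfl)
  simp only [hex, intervalIntegral.integral_same, smul_eq_mul]
  ring


noncomputable def gg (γ σ τ c : ℝ) : ℝ := (γ * (τ - c * Real.exp (σ * τ)))⁻¹
noncomputable def ggc (γ σ τ c : ℝ) : ℝ :=
  Real.exp (σ * τ) / (γ * (τ - c * Real.exp (σ * τ)) ^ 2)

lemma cont_gg (γ σ c : ℝ) (hγ : 0 < γ) {s : Set ℝ}
    (h : ∀ τ ∈ s, 0 < τ - c * Real.exp (σ * τ)) :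
    ContinuousOn (fun τ => gg γ σ τ c) s := by
  apply ContinuousOn.inv₀
  · fun_prop
  · intro τ hτ
    have := h τ hτ
    positivity

lemma cont_ggc (γ σ c : ℝ) (hγ : 0 < γ) {s : Set ℝ}
    (h : ∀ τ ∈ s, 0 < τ - c * Real.exp (σ * τ)) :
    ContinuousOn (fun τ => ggc γ σ τ c) s := by
  apply ContinuousOn.div
  · fun_prop
  · fun_prop
  · intro τ hτ
    have := h τ hτ
    positivity

lemma hasDerivAt_gg_c (γ σ τ c : ℝ) (hγ : 0 < γ) (h : 0 < τ - c * Real.exp (σ * τ)) :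
    HasDerivAt (fun c' => gg γ σ τ c') (ggc γ σ τ c) c := by
  have hne : γ * (τ - c * Real.exp (σ * τ)) ≠ 0 := by positivity
  have h1 : HasDerivAt (fun c' => γ * (τ - c' * Real.exp (σ * τ)))
      (γ * (-(Real.exp (σ * τ)))) c := by
    simpa using (((hasDerivAt_id c).mul_const (Real.exp (σ * τ))).const_sub τ).const_mul γ
  have h2 := h1.inv hne
  refine h2.congr_deriv ?_
  unfold ggc
  have h3 : τ - c * Real.exp (σ * τ) ≠ 0 := ne_of_gt h
  field_simp

lemma param_deriv (γ σ p q c₀ m : ℝ) (hγ : 0 < γ) (hm : 0 < m)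
    (hden : ∀ τ ∈ uIcc p q, m ≤ τ - c₀ * Real.exp (σ * τ)) :
    HasDerivAt (fun c => ∫ τ in p..q, gg γ σ τ c) (∫ τ in p..q, ggc γ σ τ c₀) c₀ := by
  set Eb := Real.exp (|σ| * (|p| + |q|)) with hEb
  have hEbpos : 0 < Eb := Real.exp_pos _
  have hEble : ∀ τ ∈ uIcc p q, Real.exp (σ * τ) ≤ Eb := by
    intro τ hτ
    apply Real.exp_le_exp.2
    have habs : |τ| ≤ |p| + |q| := by
      have hτ' : p ⊓ q ≤ τ ∧ τ ≤ p ⊔ q := hτ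
      have hlo' : -(|p| + |q|) ≤ p ⊓ q :=
        le_inf (by nlinarith [abs_nonneg q, neg_abs_le p])
          (by nlinarith [abs_nonneg p, neg_abs_le q])
      have hhi : p ⊔ q ≤ |p| + |q| :=
        sup_le (by nlinarith [abs_nonneg q, le_abs_self p])
          (by nlinarith [abs_nonneg p, le_abs_self q])
      rw [abs_le]
      exact ⟨le_trans hlo' hτ'.1, le_trans hτ'.2 hhi⟩
    calc σ * τ ≤ |σ * τ| := le_abs_self _
    _ = |σ| * |τ| := abs_mul _ _
    _ ≤ |σ| * (|p| + |q|) := by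
        apply mul_le_mul_of_nonneg_left habs (abs_nonneg σ)
  set ε := m / (2 * Eb) with hεdef
  have hε : 0 < ε := by positivity
  have hlow : ∀ τ ∈ uIcc p q, ∀ c ∈ Metric.ball c₀ ε, m / 2 ≤ τ - c * Real.exp (σ * τ) := by
    intro τ hτ c hc
    have h1 := hden τ hτ
    have h2 := hEble τ hτ
    have h3 : |c - c₀| < ε := by rwa [Metric.mem_ball, Real.dist_eq] at hc
    have h4 : 0 < Real.exp (σ * τ) := Real.exp_pos _
    have : τ - c * Real.exp (σ * τ)
        = (τ - c₀ * Real.exp (σ * τ)) - (c - c₀) * Real.exp (σ * τ) := by ring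
    rw [this]
    have h5 : (c - c₀) * Real.exp (σ * τ) ≤ |c - c₀| * Eb := by
      calc (c - c₀) * Real.exp (σ * τ) ≤ |c - c₀| * Real.exp (σ * τ) :=
            mul_le_mul_of_nonneg_right (le_abs_self _) h4.le
      _ ≤ |c - c₀| * Eb := mul_le_mul_of_nonneg_left h2 (abs_nonneg _)
    have h6 : |c - c₀| * Eb ≤ ε * Eb := mul_le_mul_of_nonneg_right h3.le hEbpos.le
    have h7 : ε * Eb = m / 2 := by
      rw [hεdef]; field_simp
    nlinarith
  set bnd : ℝ := Eb / (γ * (m / 2) ^ 2) with hbnd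
  have key := intervalIntegral.hasDerivAt_integral_of_dominated_loc_of_deriv_le (μ := volume)
    (F := fun c τ => gg γ σ τ c) (F' := fun c τ => ggc γ σ τ c) (x₀ := c₀) (a := p) (b := q)
    (bound := fun _ => bnd) (Metric.ball_mem_nhds c₀ hε)
    ?_ ?_ ?_ ?_ ?_ ?_
  · exact key.2
  · -- measurability of gg near c₀
    filter_upwards [Metric.ball_mem_nhds c₀ hε] with c hc
    apply ContinuousOn.aestronglyMeasurable _ measurableSet_uIoc
    apply (cont_gg γ σ c hγ ?_).mono uIoc_subset_uIcc
    intro τ hτ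
    have := hlow τ hτ c hc
    linarith
  · -- integrability at c₀
    apply ContinuousOn.intervalIntegrable
    apply cont_gg γ σ c₀ hγ
    intro τ hτ
    have := hden τ hτ; linarith
  · -- measurability of ggc at c₀
    apply ContinuousOn.aestronglyMeasurable _ measurableSet_uIoc
    apply (cont_ggc γ σ c₀ hγ ?_).mono uIoc_subset_uIcc
    intro τ hτ
    have := hden τ hτ; linarith
  · -- bound
    apply Eventually.of_forall
    intro τ hτ c hc
    have hτ' := uIoc_subset_uIcc hτ
    have h1 := hlow τ hτ' c hc
    have h2 := hEble τ hτ'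
    have h4 : 0 < Real.exp (σ * τ) := Real.exp_pos _
    rw [Real.norm_eq_abs]
    show |ggc γ σ τ c| ≤ bnd
    have hpos : 0 < τ - c * Real.exp (σ * τ) := by linarith
    have : ggc γ σ τ c = Real.exp (σ * τ) / (γ * (τ - c * Real.exp (σ * τ)) ^ 2) := rfl
    rw [this, abs_of_nonneg (by positivity)]
    rw [hbnd, div_le_div_iff₀ (by positivity) (by positivity)]
    have h5 : (m / 2) ^ 2 ≤ (τ - c * Real.exp (σ * τ)) ^ 2 := by nlinarith
    have h6 : Real.exp (σ * τ) * (m / 2) ^ 2 ≤ Eb * (τ - c * Real.exp (σ * τ)) ^ 2 :=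
      mul_le_mul h2 h5 (by positivity) hEbpos.le
    nlinarith [h6, hγ]
  · exact intervalIntegrable_const
  · -- differentiability
    apply Eventually.of_forall
    intro τ hτ c hc
    apply hasDerivAt_gg_c γ σ τ c hγ
    have := hlow τ (uIoc_subset_uIcc hτ) c hc
    linarith


/-- Explicit formulas for the sensitivities u_i(s) = ∂Ψ₁/∂x_i − ∂Ψ₁/∂y_i and
u_i(s)+v_i(s) of the SIR flow with constant control σᵢ. -/
theorem sensitivity_formulas (γ σi ti ti1 xi yi : ℝ)
    (hγ : 0 < γ) (hσi : 0 ≤ σi) (hti : ti < ti1) (hxi : 0 < xi) (hyi : 0 < yi)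
    (Ψ₁ Ψ₂ : ℝ → ℝ → ℝ → ℝ → ℝ)
    (hinit : ∀ a b : ℝ, Ψ₁ ti ti a b = a ∧ Ψ₂ ti ti a b = b)
    (hode1 : ∀ a b : ℝ, 0 < a → 0 < b → ∀ s ∈ Set.Icc ti ti1,
      HasDerivAt (fun u => Ψ₁ u ti a b) (-(γ * σi * Ψ₁ s ti a b * Ψ₂ s ti a b)) s)
    (hode2 : ∀ a b : ℝ, 0 < a → 0 < b → ∀ s ∈ Set.Icc ti ti1,
      HasDerivAt (fun u => Ψ₂ u ti a b) (γ * σi * Ψ₁ s ti a b * Ψ₂ s ti a b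
        - γ * Ψ₂ s ti a b) s)
    (hpos : ∀ a b : ℝ, 0 < a → 0 < b → ∀ s ∈ Set.Icc ti ti1,
      0 < Ψ₁ s ti a b ∧ 0 < Ψ₂ s ti a b)
    (hcons : ∀ a b : ℝ, 0 < a → 0 < b → ∀ s ∈ Set.Icc ti ti1,
      Ψ₁ s ti a b * Real.exp (-σi * (Ψ₁ s ti a b + Ψ₂ s ti a b))
        = a * Real.exp (-σi * (a + b)))
    (hdiff : ∀ s ∈ Set.Icc ti ti1, ∀ j : Fin 2,
      Differentiable ℝ (fun a => (if j = 0 then Ψ₁ else Ψ₂) s ti a yi) ∧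
      Differentiable ℝ (fun b => (if j = 0 then Ψ₁ else Ψ₂) s ti xi b)) :
    ∀ s ∈ Set.Icc ti ti1,
      (deriv (fun a => Ψ₁ s ti a yi) xi - deriv (fun b => Ψ₁ s ti xi b) yi)
        = Ψ₁ s ti xi yi / xi +
          γ * σi * (Ψ₁ s ti xi yi * Ψ₂ s ti xi yi / xi) *
            ∫ r in ti..s, Ψ₁ r ti xi yi / Ψ₂ r ti xi yi ∧
      (deriv (fun a => Ψ₁ s ti a yi) xi - deriv (fun b => Ψ₁ s ti xi b) yi)
        + (deriv (fun a => Ψ₂ s ti a yi) xi - deriv (fun b => Ψ₂ s ti xi b) yi)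
        = Ψ₂ s ti xi yi / xi * γ * ∫ r in ti..s, Ψ₁ r ti xi yi / Ψ₂ r ti xi yi := by
  intro s hs
  -- abbreviations
  set C : ℝ → ℝ → ℝ := fun a b => a * Real.exp (-σi * (a + b)) with hCdef
  set S : ℝ → ℝ → ℝ → ℝ := fun r a b => Ψ₁ r ti a b + Ψ₂ r ti a b with hSdef
  -- derivative of S in time
  have hSd : ∀ a b : ℝ, 0 < a → 0 < b → ∀ r ∈ Set.Icc ti ti1,
      HasDerivAt (fun u => S u a b) (-(γ * Ψ₂ r ti a b)) r := by
    intro a b ha hb r hr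
    have := (hode1 a b ha hb r hr).add (hode2 a b ha hb r hr)
    refine this.congr_deriv ?_
    ring
  -- continuity of the flow in time
  have hc1 : ∀ a b : ℝ, 0 < a → 0 < b →
      ContinuousOn (fun r => Ψ₁ r ti a b) (Set.Icc ti ti1) := by
    intro a b ha hb r hr
    exact (hode1 a b ha hb r hr).continuousAt.continuousWithinAt
  have hc2 : ∀ a b : ℝ, 0 < a → 0 < b →
      ContinuousOn (fun r => Ψ₂ r ti a b) (Set.Icc ti ti1) := by
    intro a b ha hb r hr
    exact (hode2 a b ha hb r hr).continuousAt.continuousWithinAt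
  have hcS : ∀ a b : ℝ, 0 < a → 0 < b →
      ContinuousOn (fun r => S r a b) (Set.Icc ti ti1) :=
    fun a b ha hb => (hc1 a b ha hb).add (hc2 a b ha hb)
  -- the conserved quantity, rearranged
  have hS0 : ∀ a b : ℝ, S ti a b = a + b := by
    intro a b
    simp only [hSdef]
    rw [(hinit a b).1, (hinit a b).2]
  have hΨeq : ∀ a b : ℝ, 0 < a → 0 < b → ∀ r ∈ Set.Icc ti ti1,
      Ψ₁ r ti a b = C a b * Real.exp (σi * S r a b) := by
    intro a b ha hb r hr
    have h := hcons a b ha hb r hr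
    simp only [hCdef, hSdef]
    rw [← h, mul_assoc, ← Real.exp_add]
    have hz : -σi * (Ψ₁ r ti a b + Ψ₂ r ti a b) + σi * (Ψ₁ r ti a b + Ψ₂ r ti a b) = 0 := by
      ring
    rw [hz, Real.exp_zero, mul_one]
  have hden : ∀ a b : ℝ, 0 < a → 0 < b → ∀ r ∈ Set.Icc ti ti1,
      S r a b - C a b * Real.exp (σi * S r a b) = Ψ₂ r ti a b := by
    intro a b ha hb r hr
    rw [← hΨeq a b ha hb r hr, hSdef]
    ring
  -- S is decreasing, so S s' ≤ a + b
  have hmono : ∀ a b : ℝ, 0 < a → 0 < b → ∀ s' ∈ Set.Icc ti ti1,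
      S s' a b ≤ a + b := by
    intro a b ha hb s' hs'
    have hanti : AntitoneOn (fun r => S r a b) (Set.Icc ti ti1) := by
      apply antitoneOn_of_deriv_nonpos (convex_Icc ti ti1) (hcS a b ha hb)
      · intro r hr
        rw [interior_Icc] at hr
        exact ((hSd a b ha hb r (Ioo_subset_Icc_self hr)).differentiableAt).differentiableWithinAt
      · intro r hr
        rw [interior_Icc] at hr
        rw [(hSd a b ha hb r (Ioo_subset_Icc_self hr)).deriv]
        have := (hpos a b ha hb r (Ioo_subset_Icc_self hr)).2
        nlinarith
    have h2 := hanti (left_mem_Icc.2 hti.le) hs' hs'.1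
    simpa only [hS0 a b] using h2
  -- positivity of the denominator on the τ-interval
  have hIVT : ∀ a b : ℝ, 0 < a → 0 < b → ∀ s' ∈ Set.Icc ti ti1,
      ∀ τ ∈ Set.Icc (S s' a b) (a + b), 0 < τ - C a b * Real.exp (σi * τ) := by
    intro a b ha hb s' hs' τ hτ
    have hsub : Set.Icc (S s' a b) (S ti a b) ⊆ (fun r => S r a b) '' Set.Icc ti s' :=
      intermediate_value_Icc' hs'.1 ((hcS a b ha hb).mono (Icc_subset_Icc_right hs'.2))
    obtain ⟨r, hr, hreq⟩ := hsub (by rw [hS0 a b]; exact hτ)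
    have hrI : r ∈ Set.Icc ti ti1 := ⟨hr.1, le_trans hr.2 hs'.2⟩
    rw [← hreq]
    simp only []
    rw [hden a b ha hb r hrI]
    exact (hpos a b ha hb r hrI).2
  -- the key time identity
  have StepK : ∀ a b : ℝ, 0 < a → 0 < b → ∀ s' ∈ Set.Icc ti ti1,
      (∫ τ in (S s' a b)..(a + b), gg γ σi τ (C a b)) = s' - ti := by
    intro a b ha hb
    set f : ℝ → ℝ := fun r => (∫ τ in (S r a b)..(a + b), gg γ σi τ (C a b)) - (r - ti)
      with hfdef
    have hUo : IsOpen {τ : ℝ | 0 < τ - C a b * Real.exp (σi * τ)} :=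
      isOpen_lt continuous_const (by fun_prop)
    have hcontat : ∀ τ ∈ {τ : ℝ | 0 < τ - C a b * Real.exp (σi * τ)},
        ContinuousAt (fun τ => gg γ σi τ (C a b)) τ := by
      intro τ hτ
      exact (cont_gg γ σi (C a b) hγ
        (fun τ' (hτ' : τ' ∈ {τ : ℝ | 0 < τ - C a b * Real.exp (σi * τ)}) => hτ')).continuousAt
        (hUo.mem_nhds hτ)
    have hfd : ∀ r ∈ Set.Icc ti ti1, HasDerivAt f 0 r := by
      intro r hr
      have hmemU : S r a b ∈ {τ : ℝ | 0 < τ - C a b * Real.exp (σi * τ)} := by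
        simp only [mem_setOf_eq]
        rw [hden a b ha hb r hr]
        exact (hpos a b ha hb r hr).2
      have hint : IntervalIntegrable (fun τ => gg γ σi τ (C a b)) volume (S r a b) (a + b) := by
        apply ContinuousOn.intervalIntegrable
        rw [uIcc_of_le (hmono a b ha hb r hr)]
        exact cont_gg γ σi (C a b) hγ (hIVT a b ha hb r hr)
      have hmeas : StronglyMeasurableAtFilter (fun τ => gg γ σi τ (C a b))
          (𝓝 (S r a b)) volume :=
        ContinuousAt.stronglyMeasurableAtFilter hUo hcontat _ hmemU
      have hG := intervalIntegral.integral_hasDerivAt_left hint hmeas (hcontat _ hmemU)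
      have hcomp := hG.comp r (hSd a b ha hb r hr)
      have h1 : HasDerivAt f
          (-(gg γ σi (S r a b) (C a b)) * (-(γ * Ψ₂ r ti a b)) - 1) r :=
        HasDerivAt.sub hcomp ((hasDerivAt_id r).sub_const ti)
      convert h1 using 1
      have hval : gg γ σi (S r a b) (C a b) = (γ * Ψ₂ r ti a b)⁻¹ := by
        unfold gg
        rw [hden a b ha hb r hr]
      rw [hval]
      have hne : γ * Ψ₂ r ti a b ≠ 0 := by
        have := (hpos a b ha hb r hr).2
        positivity
      field_simp
      rw [div_self (ne_of_gt (hpos a b ha hb r hr).2), sub_self]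
    intro s' hs'
    have hconst := constant_of_has_deriv_right_zero (f := f) (a := ti) (b := ti1)
      (fun r hr => (hfd r hr).continuousAt.continuousWithinAt)
      (fun r hr => (hfd r (Ico_subset_Icc_self hr)).hasDerivWithinAt)
    have h2 := hconst s' hs'
    have hfti : f ti = 0 := by
      simp only [hfdef]
      rw [hS0 a b]
      simp
    rw [hfti] at h2
    simp only [hfdef] at h2
    linarith
  -- fixed-point facts
  have hΨ1pos := (hpos xi yi hxi hyi s hs).1
  have hΨ2pos := (hpos xi yi hxi hyi s hs).2
  set l₀ := S s xi yi with hl₀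
  set u₀ := xi + yi with hu₀
  set C₀ := C xi yi with hC₀
  have hlu : l₀ ≤ u₀ := hmono xi yi hxi hyi s hs
  have hC₀pos : 0 < C₀ := by
    rw [hC₀, hCdef]
    positivity
  set U : Set (ℝ × ℝ) := {p | 0 < p.1 - p.2 * Real.exp (σi * p.1)} with hUdef
  have hUo : IsOpen U := isOpen_lt continuous_const (by fun_prop)
  have hggcont : ContinuousOn (fun p : ℝ × ℝ => gg γ σi p.1 p.2) U := by
    apply ContinuousOn.inv₀
    · fun_prop
    · intro p hp
      have h : 0 < p.1 - p.2 * Real.exp (σi * p.1) := hp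
      positivity
  have hKU : ∀ τ ∈ Set.Icc l₀ u₀, (τ, C₀) ∈ U := by
    intro τ hτ
    exact hIVT xi yi hxi hyi s hs τ hτ
  -- a uniform thickening on which the denominator stays positive
  obtain ⟨δ, hδpos, hδsub⟩ : ∃ δ > 0, ∀ τ ∈ Set.Icc (l₀ - δ) (u₀ + δ), ∀ c : ℝ,
      |c - C₀| ≤ δ → 0 < τ - c * Real.exp (σi * τ) := by
    have hK : IsCompact ((Set.Icc l₀ u₀) ×ˢ ({C₀} : Set ℝ)) :=
      isCompact_Icc.prod isCompact_singleton
    have hKsub : (Set.Icc l₀ u₀) ×ˢ ({C₀} : Set ℝ) ⊆ U := by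
      rintro ⟨τ, c⟩ ⟨hτ, hc⟩
      rw [mem_singleton_iff] at hc
      subst hc
      exact hKU τ hτ
    obtain ⟨δ, hδpos, hδsub⟩ := hK.exists_thickening_subset_open hUo hKsub
    refine ⟨δ / 2, by positivity, ?_⟩
    intro τ hτ c hc
    obtain ⟨hτ1, hτ2⟩ := hτ
    have hproj : max l₀ (min τ u₀) ∈ Set.Icc l₀ u₀ :=
      ⟨le_max_left _ _, max_le hlu (min_le_right _ _)⟩
    have habs : |τ - max l₀ (min τ u₀)| ≤ δ / 2 := by
      rcases le_total τ l₀ with h | h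
      · rw [min_eq_left (h.trans hlu), max_eq_left h, abs_le]
        constructor
        · linarith
        · have h9 : τ - l₀ ≤ 0 := by linarith
          have h8 : (0:ℝ) ≤ δ / 2 := by linarith
          exact h9.trans h8
      · rcases le_total τ u₀ with h2 | h2
        · rw [min_eq_left h2, max_eq_right h]
          simp only [sub_self, abs_zero]
          positivity
        · rw [min_eq_right h2, max_eq_right hlu, abs_le]
          constructor <;> linarith [hδpos]
    have hdist : dist ((τ, c) : ℝ × ℝ) ((max l₀ (min τ u₀), C₀) : ℝ × ℝ) < δ := by
      rw [Prod.dist_eq]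
      apply max_lt
      · rw [Real.dist_eq]; linarith [habs]
      · rw [Real.dist_eq]; linarith [hc]
    have hmem : ((τ, c) : ℝ × ℝ) ∈ Metric.thickening δ ((Set.Icc l₀ u₀) ×ˢ ({C₀} : Set ℝ)) :=
      Metric.mem_thickening_iff.2 ⟨(max l₀ (min τ u₀), C₀), ⟨hproj, rfl⟩, hdist⟩
    exact hδsub hmem
  -- a positive lower bound for the denominator on [l₀, u₀]
  obtain ⟨m, hmpos, hm⟩ : ∃ m > 0, ∀ τ ∈ uIcc l₀ u₀, m ≤ τ - C₀ * Real.exp (σi * τ) := by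
    have hne : (Set.Icc l₀ u₀).Nonempty := nonempty_Icc.2 hlu
    have hcont : ContinuousOn (fun τ => τ - C₀ * Real.exp (σi * τ)) (Set.Icc l₀ u₀) := by
      fun_prop
    obtain ⟨τm, hτm, hminon⟩ := isCompact_Icc.exists_isMinOn hne hcont
    refine ⟨_, hIVT xi yi hxi hyi s hs _ hτm, ?_⟩
    rw [uIcc_of_le hlu]
    exact fun τ hτ => hminon hτ
  -- differentiability in the data
  have hD1a : Differentiable ℝ (fun a => Ψ₁ s ti a yi) := by simpa using (hdiff s hs 0).1
  have hD1b : Differentiable ℝ (fun b => Ψ₁ s ti xi b) := by simpa using (hdiff s hs 0).2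
  have hD2a : Differentiable ℝ (fun a => Ψ₂ s ti a yi) := by
    have := (hdiff s hs 1).1
    simpa using this
  have hD2b : Differentiable ℝ (fun b => Ψ₂ s ti xi b) := by
    have := (hdiff s hs 1).2
    simpa using this
  -- the key derivative identity, in any one-parameter direction
  have KeyDeriv : ∀ (el eC : ℝ → ℝ) (z el' ec' : ℝ),
      HasDerivAt el el' z → el z = l₀ → HasDerivAt eC ec' z → eC z = C₀ →
      (∀ᶠ w in 𝓝 z, (∫ τ in el w..(u₀ + (w - z)), gg γ σi τ (eC w)) = s - ti) →
      gg γ σi u₀ C₀ * 1 + (∫ τ in l₀..u₀, ggc γ σi τ C₀) * ec'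
        - gg γ σi l₀ C₀ * el' = 0 := by
    intro el eC z el' ec' hel helz heC heCz hKev
    have hmemU_l : (l₀, C₀) ∈ U := hKU l₀ ⟨le_refl _, hlu⟩
    have hmemU_u : (u₀, C₀) ∈ U := hKU u₀ ⟨hlu, le_refl _⟩
    have heu : HasDerivAt (fun w => u₀ + (w - z)) 1 z := by
      simpa using ((hasDerivAt_id z).sub_const z).const_add u₀
    have hT2 : HasDerivAt (fun w => ∫ τ in u₀..(u₀ + (w - z)), gg γ σi τ (eC w))
        (gg γ σi u₀ C₀ * 1) z :=
      mov_endpoint hUo hggcont hmemU_u heu (by simp) heC.continuousAt heCz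
    have hT3 : HasDerivAt (fun w => ∫ τ in l₀..(el w), gg γ σi τ (eC w))
        (gg γ σi l₀ C₀ * el') z :=
      mov_endpoint hUo hggcont hmemU_l hel helz heC.continuousAt heCz
    have hB : HasDerivAt (fun c => ∫ τ in l₀..u₀, gg γ σi τ c)
        (∫ τ in l₀..u₀, ggc γ σi τ C₀) C₀ :=
      param_deriv γ σi l₀ u₀ C₀ m hγ hmpos hm
    have hT1 : HasDerivAt (fun w => ∫ τ in l₀..u₀, gg γ σi τ (eC w))
        ((∫ τ in l₀..u₀, ggc γ σi τ C₀) * ec') z := by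
      have hB' : HasDerivAt (fun c => ∫ τ in l₀..u₀, gg γ σi τ c)
          (∫ τ in l₀..u₀, ggc γ σi τ (eC z)) (eC z) := by
        rw [heCz]; exact hB
      have := hB'.comp z heC
      rw [heCz] at this
      exact this
    have hsum := (hT1.add hT2).sub hT3
    -- the sum is eventually constant
    have hev : (fun w => ((∫ τ in l₀..u₀, gg γ σi τ (eC w))
          + ∫ τ in u₀..(u₀ + (w - z)), gg γ σi τ (eC w))
          - ∫ τ in l₀..(el w), gg γ σi τ (eC w)) =ᶠ[𝓝 z] fun _ => s - ti := by
      have hcel : ContinuousAt el z := hel.continuousAt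
      have hceC : ContinuousAt eC z := heC.continuousAt
      have hev1 : ∀ᶠ w in 𝓝 z, el w ∈ Set.Icc (l₀ - δ) (u₀ + δ) := by
        refine hcel.eventually_mem ?_
        rw [helz]
        exact Icc_mem_nhds (by linarith) (by linarith [hlu])
      have hev2 : ∀ᶠ w in 𝓝 z, u₀ + (w - z) ∈ Set.Icc (l₀ - δ) (u₀ + δ) := by
        have hcontu : ContinuousAt (fun w => u₀ + (w - z)) z := by fun_prop
        refine hcontu.eventually_mem ?_
        simp only [sub_self, add_zero]
        exact Icc_mem_nhds (by linarith [hlu]) (by linarith)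
      have hev3 : ∀ᶠ w in 𝓝 z, |eC w - C₀| ≤ δ := by
        have hmem : Set.Icc (C₀ - δ) (C₀ + δ) ∈ 𝓝 (eC z) := by
          rw [heCz]
          exact Icc_mem_nhds (by linarith) (by linarith)
        filter_upwards [hceC.eventually_mem hmem] with w hw
        rw [abs_le]
        exact ⟨by linarith [hw.1], by linarith [hw.2]⟩
      have hle : l₀ - δ ≤ u₀ + δ := by linarith [hlu]
      filter_upwards [hev1, hev2, hev3, hKev] with w h1 h2 h3 hK
      have hbig : ContinuousOn (fun τ => gg γ σi τ (eC w)) (Set.Icc (l₀ - δ) (u₀ + δ)) :=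
        cont_gg γ σi (eC w) hγ (fun τ hτ => hδsub τ hτ _ h3)
      have hI : ∀ p q : ℝ, p ∈ Set.Icc (l₀ - δ) (u₀ + δ) → q ∈ Set.Icc (l₀ - δ) (u₀ + δ) →
          IntervalIntegrable (fun τ => gg γ σi τ (eC w)) volume p q := by
        intro p q hp hq
        apply ContinuousOn.intervalIntegrable
        apply hbig.mono
        have hp' : p ∈ uIcc (l₀ - δ) (u₀ + δ) := by rwa [uIcc_of_le hle]
        have hq' : q ∈ uIcc (l₀ - δ) (u₀ + δ) := by rwa [uIcc_of_le hle]
        have := uIcc_subset_uIcc hp' hq'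
        rwa [uIcc_of_le hle] at this
      have hl₀mem : l₀ ∈ Set.Icc (l₀ - δ) (u₀ + δ) := ⟨by linarith, by linarith [hlu]⟩
      have hu₀mem : u₀ ∈ Set.Icc (l₀ - δ) (u₀ + δ) := ⟨by linarith [hlu], by linarith⟩
      have e1 := intervalIntegral.integral_add_adjacent_intervals
        (hI (el w) l₀ h1 hl₀mem) (hI l₀ u₀ hl₀mem hu₀mem)
      have e2 := intervalIntegral.integral_add_adjacent_intervals
        (hI (el w) u₀ h1 hu₀mem) (hI u₀ (u₀ + (w - z)) hu₀mem h2)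
      have e3 := intervalIntegral.integral_symm (μ := volume)
        (f := fun τ => gg γ σi τ (eC w)) l₀ (el w)
      show ((∫ τ in l₀..u₀, gg γ σi τ (eC w))
          + ∫ τ in u₀..(u₀ + (w - z)), gg γ σi τ (eC w))
          - (∫ τ in l₀..(el w), gg γ σi τ (eC w)) = s - ti
      rw [← hK]
      linarith [e1, e2, e3]
    have hconst : HasDerivAt (fun _ : ℝ => s - ti)
        (((∫ τ in l₀..u₀, ggc γ σi τ C₀) * ec' + gg γ σi u₀ C₀ * 1)
          - gg γ σi l₀ C₀ * el') z :=
      HasDerivAt.congr_of_eventuallyEq hsum hev.symm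
    have hzero := (hasDerivAt_const z (s - ti)).unique hconst
    linarith [hzero]
  -- parameter derivatives of the data maps
  have hela : HasDerivAt (fun a => S s a yi)
      (deriv (fun a => Ψ₁ s ti a yi) xi + deriv (fun a => Ψ₂ s ti a yi) xi) xi := by
    simp only [hSdef]
    exact ((hD1a xi).hasDerivAt).add ((hD2a xi).hasDerivAt)
  have helb : HasDerivAt (fun b => S s xi b)
      (deriv (fun b => Ψ₁ s ti xi b) yi + deriv (fun b => Ψ₂ s ti xi b) yi) yi := by
    simp only [hSdef]
    exact ((hD1b yi).hasDerivAt).add ((hD2b yi).hasDerivAt)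
  set e₀ := Real.exp (-σi * (xi + yi)) with he₀
  have he₀pos : 0 < e₀ := Real.exp_pos _
  have heCa : HasDerivAt (fun a => C a yi) ((1 - σi * xi) * e₀) xi := by
    simp only [hCdef]
    have h1 : HasDerivAt (fun a : ℝ => -σi * (a + yi)) (-σi) xi := by
      simpa using ((hasDerivAt_id xi).add_const yi).const_mul (-σi)
    have h2 := (hasDerivAt_id xi).mul h1.exp
    refine h2.congr_deriv ?_
    simp only [id_eq]
    rw [he₀]
    ring
  have heCb : HasDerivAt (fun b => C xi b) (-(σi * xi) * e₀) yi := by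
    simp only [hCdef]
    have h1 : HasDerivAt (fun b : ℝ => -σi * (xi + b)) (-σi) yi := by
      simpa using ((hasDerivAt_id yi).const_add xi).const_mul (-σi)
    have h2 := (h1.exp).const_mul xi
    refine h2.congr_deriv ?_
    rw [he₀]
    ring
  -- the two derivative equations
  have hKeva : ∀ᶠ w in 𝓝 xi,
      (∫ τ in ((fun a => S s a yi) w)..(u₀ + (w - xi)), gg γ σi τ ((fun a => C a yi) w))
        = s - ti := by
    filter_upwards [Ioi_mem_nhds hxi] with w hw
    have harith : u₀ + (w - xi) = w + yi := by rw [hu₀]; ring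
    rw [harith]
    exact StepK w yi hw hyi s hs
  have hKevb : ∀ᶠ w in 𝓝 yi,
      (∫ τ in ((fun b => S s xi b) w)..(u₀ + (w - yi)), gg γ σi τ ((fun b => C xi b) w))
        = s - ti := by
    filter_upwards [Ioi_mem_nhds hyi] with w hw
    have harith : u₀ + (w - yi) = xi + w := by rw [hu₀]; ring
    rw [harith]
    exact StepK xi w hxi hw s hs
  have Eqa := KeyDeriv (fun a => S s a yi) (fun a => C a yi) xi _ _
    hela hl₀.symm heCa hC₀.symm hKeva
  have Eqb := KeyDeriv (fun b => S s xi b) (fun b => C xi b) yi _ _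
    helb (by rw [hl₀]) heCb (by rw [hC₀]) hKevb
  have hggl : gg γ σi l₀ C₀ = (γ * Ψ₂ s ti xi yi)⁻¹ := by
    unfold gg
    rw [hl₀, hC₀, hden xi yi hxi hyi s hs]
  have hgglpos : 0 < gg γ σi l₀ C₀ := by
    rw [hggl]
    positivity
  -- the difference equation for u + v
  have hw : gg γ σi l₀ C₀ * ((deriv (fun a => Ψ₁ s ti a yi) xi + deriv (fun a => Ψ₂ s ti a yi) xi)
      - (deriv (fun b => Ψ₁ s ti xi b) yi + deriv (fun b => Ψ₂ s ti xi b) yi))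
      = (∫ τ in l₀..u₀, ggc γ σi τ C₀) * e₀ := by
    linear_combination Eqb - Eqa
  have hwval : (deriv (fun a => Ψ₁ s ti a yi) xi + deriv (fun a => Ψ₂ s ti a yi) xi)
      - (deriv (fun b => Ψ₁ s ti xi b) yi + deriv (fun b => Ψ₂ s ti xi b) yi)
      = γ * Ψ₂ s ti xi yi * ((∫ τ in l₀..u₀, ggc γ σi τ C₀) * e₀) := by
    rw [hggl] at hw
    have hne : γ * Ψ₂ s ti xi yi ≠ 0 := by positivity
    field_simp at hw
    linarith [hw]
  -- change of variables in the ggc-integral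
  have hsubst : (∫ τ in l₀..u₀, ggc γ σi τ C₀)
      = C₀⁻¹ * ∫ r in ti..s, Ψ₁ r ti xi yi / Ψ₂ r ti xi yi := by
    have htis : ti ≤ s := hs.1
    have huI : uIcc ti s = Set.Icc ti s := uIcc_of_le htis
    have hIsub : Set.Icc ti s ⊆ Set.Icc ti ti1 := Set.Icc_subset_Icc_right hs.2
    have hder : ∀ r ∈ uIcc ti s,
        HasDerivAt (fun r => S r xi yi) (-(γ * Ψ₂ r ti xi yi)) r := by
      intro r hr
      exact hSd xi yi hxi hyi r (hIsub (huI ▸ hr))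
    have hcontd : ContinuousOn (fun r => -(γ * Ψ₂ r ti xi yi)) (uIcc ti s) := by
      rw [huI]
      exact (continuousOn_const.mul ((hc2 xi yi hxi hyi).mono hIsub)).neg
    have hcontg : ContinuousOn (fun τ => ggc γ σi τ C₀)
        ((fun r => S r xi yi) '' uIcc ti s) := by
      apply cont_ggc γ σi C₀ hγ
      rintro τ ⟨r, hr, rfl⟩
      rw [huI] at hr
      have hrI := hIsub hr
      rw [hC₀, hden xi yi hxi hyi r hrI]
      exact (hpos xi yi hxi hyi r hrI).2
    have hcv := intervalIntegral.integral_comp_smul_deriv' hder hcontd hcontg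
    have hC₀ne : C₀ ≠ 0 := ne_of_gt hC₀pos
    have hCne : C xi yi ≠ 0 := by rw [← hC₀]; exact hC₀ne
    have hlhs : Set.EqOn
        (fun r => (-(γ * Ψ₂ r ti xi yi)) • ((fun τ => ggc γ σi τ C₀) ∘ (fun r => S r xi yi)) r)
        (fun r => -(C₀⁻¹ * (Ψ₁ r ti xi yi / Ψ₂ r ti xi yi))) (uIcc ti s) := by
      intro r hr
      rw [huI] at hr
      have hrI := hIsub hr
      have h2p := (hpos xi yi hxi hyi r hrI).2
      have h1p := (hpos xi yi hxi hyi r hrI).1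
      have h1eq := hΨeq xi yi hxi hyi r hrI
      simp only [Function.comp, smul_eq_mul]
      unfold ggc
      rw [hC₀, hden xi yi hxi hyi r hrI]
      have hE : Real.exp (σi * S r xi yi) = Ψ₁ r ti xi yi / C xi yi := by
        rw [h1eq]
        field_simp
      rw [hE]
      have hγne : γ ≠ 0 := ne_of_gt hγ
      have h2ne : Ψ₂ r ti xi yi ≠ 0 := ne_of_gt h2p
      field_simp
    rw [intervalIntegral.integral_congr hlhs] at hcv
    have h5 : (∫ r in ti..s, -(C₀⁻¹ * (Ψ₁ r ti xi yi / Ψ₂ r ti xi yi)))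
        = -(C₀⁻¹ * ∫ r in ti..s, Ψ₁ r ti xi yi / Ψ₂ r ti xi yi) := by
      rw [intervalIntegral.integral_neg, intervalIntegral.integral_const_mul]
    rw [h5] at hcv
    have h6 : (∫ τ in ((fun r => S r xi yi) ti)..((fun r => S r xi yi) s), ggc γ σi τ C₀)
        = -(∫ τ in l₀..u₀, ggc γ σi τ C₀) := by
      have hSti : (fun r => S r xi yi) ti = u₀ := by
        show S ti xi yi = u₀
        rw [hS0 xi yi, hu₀]
      have hSs : (fun r => S r xi yi) s = l₀ := by rw [hl₀]
      rw [hSti, hSs]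
      rw [intervalIntegral.integral_symm]
    rw [h6] at hcv
    linarith [hcv]
  -- conclusion for u + v (the second asserted formula)
  have hC₀e : C₀ = xi * e₀ := by rw [hC₀, hCdef, he₀]
  have hxine : xi ≠ 0 := ne_of_gt hxi
  have he₀ne : e₀ ≠ 0 := ne_of_gt he₀pos
  have hgoal2 : (deriv (fun a => Ψ₁ s ti a yi) xi - deriv (fun b => Ψ₁ s ti xi b) yi)
      + (deriv (fun a => Ψ₂ s ti a yi) xi - deriv (fun b => Ψ₂ s ti xi b) yi)
      = Ψ₂ s ti xi yi / xi * γ * ∫ r in ti..s, Ψ₁ r ti xi yi / Ψ₂ r ti xi yi := by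
    rw [hsubst, hC₀e] at hwval
    have h9 : γ * Ψ₂ s ti xi yi * ((xi * e₀)⁻¹
        * (∫ r in ti..s, Ψ₁ r ti xi yi / Ψ₂ r ti xi yi) * e₀)
        = Ψ₂ s ti xi yi / xi * γ * ∫ r in ti..s, Ψ₁ r ti xi yi / Ψ₂ r ti xi yi := by
      field_simp
    linear_combination hwval + h9
  -- differentiate the conservation law in each data direction
  set X := Real.exp (-σi * (Ψ₁ s ti xi yi + Ψ₂ s ti xi yi)) with hX
  have hXpos : 0 < X := Real.exp_pos _
  have hXne : X ≠ 0 := ne_of_gt hXpos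
  have hLa : HasDerivAt
      (fun a => Ψ₁ s ti a yi * Real.exp (-σi * (Ψ₁ s ti a yi + Ψ₂ s ti a yi)))
      (deriv (fun a => Ψ₁ s ti a yi) xi * X + Ψ₁ s ti xi yi
        * (X * (-σi * (deriv (fun a => Ψ₁ s ti a yi) xi + deriv (fun a => Ψ₂ s ti a yi) xi))))
      xi := by
    have h2 := (((hD1a xi).hasDerivAt.add (hD2a xi).hasDerivAt).const_mul (-σi)).exp
    have h3 := ((hD1a xi).hasDerivAt).mul h2
    refine h3.congr_deriv ?_
    rw [hX]
    simp only [Pi.add_apply]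
  have hLb : HasDerivAt
      (fun b => Ψ₁ s ti xi b * Real.exp (-σi * (Ψ₁ s ti xi b + Ψ₂ s ti xi b)))
      (deriv (fun b => Ψ₁ s ti xi b) yi * X + Ψ₁ s ti xi yi
        * (X * (-σi * (deriv (fun b => Ψ₁ s ti xi b) yi + deriv (fun b => Ψ₂ s ti xi b) yi))))
      yi := by
    have h2 := (((hD1b yi).hasDerivAt.add (hD2b yi).hasDerivAt).const_mul (-σi)).exp
    have h3 := ((hD1b yi).hasDerivAt).mul h2
    refine h3.congr_deriv ?_
    rw [hX]
    simp only [Pi.add_apply]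
  have hconsa_ev : (fun a => Ψ₁ s ti a yi
        * Real.exp (-σi * (Ψ₁ s ti a yi + Ψ₂ s ti a yi)))
      =ᶠ[𝓝 xi] (fun a => C a yi) := by
    filter_upwards [Ioi_mem_nhds hxi] with a ha
    simp only [hCdef]
    exact hcons a yi ha hyi s hs
  have hconsb_ev : (fun b => Ψ₁ s ti xi b
        * Real.exp (-σi * (Ψ₁ s ti xi b + Ψ₂ s ti xi b)))
      =ᶠ[𝓝 yi] (fun b => C xi b) := by
    filter_upwards [Ioi_mem_nhds hyi] with b hb
    simp only [hCdef]
    exact hcons xi b hxi hb s hs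
  have hEqa' := heCa.unique (hLa.congr_of_eventuallyEq hconsa_ev.symm)
  have hEqb' := heCb.unique (hLb.congr_of_eventuallyEq hconsb_ev.symm)
  have hconsxy : Ψ₁ s ti xi yi * X = xi * e₀ := by
    rw [hX, he₀]
    exact hcons xi yi hxi hyi s hs
  have hkey1 : (deriv (fun a => Ψ₁ s ti a yi) xi - deriv (fun b => Ψ₁ s ti xi b) yi) * X
      = e₀ + σi * (Ψ₁ s ti xi yi * X)
        * ((deriv (fun a => Ψ₁ s ti a yi) xi + deriv (fun a => Ψ₂ s ti a yi) xi)
          - (deriv (fun b => Ψ₁ s ti xi b) yi + deriv (fun b => Ψ₂ s ti xi b) yi)) := by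
    linear_combination hEqb' - hEqa'
  have hu : deriv (fun a => Ψ₁ s ti a yi) xi - deriv (fun b => Ψ₁ s ti xi b) yi
      = Ψ₁ s ti xi yi / xi + σi * Ψ₁ s ti xi yi
        * ((deriv (fun a => Ψ₁ s ti a yi) xi + deriv (fun a => Ψ₂ s ti a yi) xi)
          - (deriv (fun b => Ψ₁ s ti xi b) yi + deriv (fun b => Ψ₂ s ti xi b) yi)) := by
    have hu' : (deriv (fun a => Ψ₁ s ti a yi) xi - deriv (fun b => Ψ₁ s ti xi b) yi) * xi * X
        = (Ψ₁ s ti xi yi + σi * Ψ₁ s ti xi yi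
          * ((deriv (fun a => Ψ₁ s ti a yi) xi + deriv (fun a => Ψ₂ s ti a yi) xi)
            - (deriv (fun b => Ψ₁ s ti xi b) yi + deriv (fun b => Ψ₂ s ti xi b) yi)) * xi)
          * X := by
      linear_combination xi * hkey1 - hconsxy
    have hu'' := mul_right_cancel₀ hXne hu'
    field_simp
    linear_combination hu''
  refine ⟨?_, hgoal2⟩
  linear_combination hu + (σi * Ψ₁ s ti xi yi) * hgoal2
end

section
/- In the setting of the auxiliary functions of the z-monotonicity lemma, if x + y is decreasing and there exists s₃ ∈ [t, t+τ] with σ₀x(s₃) + σ₀y(s₃) = 1, then g_t(s) = σ₀σ₁x(s)y(s) + (σ₀x(s)−1)(σ₁x(s)−1) attains its global minimum on [t, t+τ] at s₃ with g_t(s₃) = σ₀ y(s₃) > 0; in particular g_t(s) > 0 for all s ∈ [t, t+τ]. -/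
/-- If x + y is decreasing and σ₀x(s₃) + σ₀y(s₃) = 1 for some s₃ ∈ [t,t+τ], then
g(s) = σ₀σ₁x(s)y(s) + (σ₀x(s)−1)(σ₁x(s)−1) attains its global minimum on [t,t+τ] at s₃,
with g(s₃) = σ₀ y(s₃) > 0; in particular g > 0 on [t,t+τ]. -/
theorem g_minimum_positive (γ σ₀ σ₁ t τ s₃ : ℝ)
    (hγ : 0 < γ) (hσ₀ : 0 < σ₀) (h1 : 0 ≤ σ₁) (h10 : σ₁ < σ₀) (hτ : 0 < τ)
    (x y : ℝ → ℝ)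
    (hx : ∀ s ∈ Set.Icc t (t + τ), HasDerivAt x (-(γ * σ₁ * x s * y s)) s)
    (hy : ∀ s ∈ Set.Icc t (t + τ), HasDerivAt y (γ * σ₁ * x s * y s - γ * y s) s)
    (hpos : ∀ s ∈ Set.Icc t (t + τ), 0 < x s ∧ 0 < y s)
    (hanti : StrictAntiOn (fun s => x s + y s) (Set.Icc t (t + τ)))
    (hs₃ : s₃ ∈ Set.Icc t (t + τ))
    (hzero : σ₀ * x s₃ + σ₀ * y s₃ = 1) :
    (∀ s ∈ Set.Icc t (t + τ),
      σ₀ * σ₁ * x s₃ * y s₃ + (σ₀ * x s₃ - 1) * (σ₁ * x s₃ - 1) ≤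
        σ₀ * σ₁ * x s * y s + (σ₀ * x s - 1) * (σ₁ * x s - 1)) ∧
    σ₀ * σ₁ * x s₃ * y s₃ + (σ₀ * x s₃ - 1) * (σ₁ * x s₃ - 1) = σ₀ * y s₃ ∧
    (∀ s ∈ Set.Icc t (t + τ),
      0 < σ₀ * σ₁ * x s * y s + (σ₀ * x s - 1) * (σ₁ * x s - 1)) := by
  set g : ℝ → ℝ := fun s => σ₀ * σ₁ * x s * y s + (σ₀ * x s - 1) * (σ₁ * x s - 1) with hgdef
  -- derivative of g
  have hg : ∀ s ∈ Set.Icc t (t + τ),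
      HasDerivAt g (-(γ * σ₁ * σ₁ * x s * y s * (σ₀ * x s + σ₀ * y s - 1))) s := by
    intro s hs
    have hx' := hx s hs
    have hy' := hy s hs
    have H := (((hx'.const_mul (σ₀ * σ₁)).mul hy')).add
      (((hx'.const_mul σ₀).sub_const 1).mul ((hx'.const_mul σ₁).sub_const 1))
    convert H using 1
    case e'_9 => ring
    all_goals rfl
  have hsub : Set.Icc t s₃ ⊆ Set.Icc t (t + τ) := Set.Icc_subset_Icc le_rfl hs₃.2
  have hsub' : Set.Icc s₃ (t + τ) ⊆ Set.Icc t (t + τ) := Set.Icc_subset_Icc hs₃.1 le_rfl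
  -- g is antitone on [t, s₃]
  have hantig : AntitoneOn g (Set.Icc t s₃) := by
    apply antitoneOn_of_deriv_nonpos (convex_Icc t s₃)
    · exact fun s hs => (hg s (hsub hs)).continuousAt.continuousWithinAt
    · intro s hs
      rw [interior_Icc] at hs
      exact ((hg s (hsub ⟨hs.1.le, hs.2.le⟩)).differentiableAt).differentiableWithinAt
    · intro s hs
      rw [interior_Icc] at hs
      have hsmem : s ∈ Set.Icc t (t + τ) := hsub ⟨hs.1.le, hs.2.le⟩
      rw [(hg s hsmem).deriv]
      have hxy := hpos s hsmem
      have hlt : x s₃ + y s₃ < x s + y s := hanti hsmem hs₃ hs.2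
      have he : 0 ≤ σ₀ * x s + σ₀ * y s - 1 := by nlinarith
      have : 0 ≤ γ * σ₁ * σ₁ * x s * y s * (σ₀ * x s + σ₀ * y s - 1) :=
        mul_nonneg (mul_nonneg (mul_nonneg (mul_nonneg (mul_nonneg hγ.le h1) h1)
          hxy.1.le) hxy.2.le) he
      linarith
  -- g is monotone on [s₃, t+τ]
  have hmonog : MonotoneOn g (Set.Icc s₃ (t + τ)) := by
    apply monotoneOn_of_deriv_nonneg (convex_Icc s₃ (t + τ))
    · exact fun s hs => (hg s (hsub' hs)).continuousAt.continuousWithinAt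
    · intro s hs
      rw [interior_Icc] at hs
      exact ((hg s (hsub' ⟨hs.1.le, hs.2.le⟩)).differentiableAt).differentiableWithinAt
    · intro s hs
      rw [interior_Icc] at hs
      have hsmem : s ∈ Set.Icc t (t + τ) := hsub' ⟨hs.1.le, hs.2.le⟩
      rw [(hg s hsmem).deriv]
      have hxy := hpos s hsmem
      have hlt : x s + y s < x s₃ + y s₃ := hanti hs₃ hsmem hs.1
      have he : σ₀ * x s + σ₀ * y s - 1 ≤ 0 := by nlinarith
      have : γ * σ₁ * σ₁ * x s * y s * (σ₀ * x s + σ₀ * y s - 1) ≤ 0 :=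
        mul_nonpos_of_nonneg_of_nonpos (mul_nonneg (mul_nonneg (mul_nonneg
          (mul_nonneg hγ.le h1) h1) hxy.1.le) hxy.2.le) he
      linarith
  have hmin : ∀ s ∈ Set.Icc t (t + τ), g s₃ ≤ g s := by
    intro s hs
    rcases le_total s s₃ with h | h
    · exact hantig ⟨hs.1, h⟩ ⟨hs₃.1, le_rfl⟩ h
    · exact hmonog ⟨le_rfl, hs₃.2⟩ ⟨h, hs.2⟩ h
  have hval : g s₃ = σ₀ * y s₃ := by
    simp only [hgdef]
    linear_combination (σ₁ * x s₃ - 1) * hzero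
  refine ⟨hmin, hval, fun s hs => ?_⟩
  have := hmin s hs
  have hy₃ : 0 < y s₃ := (hpos s₃ hs₃).2
  have : 0 < σ₀ * y s₃ := mul_pos hσ₀ hy₃
  simp only [hgdef] at *
  linarith [hmin s hs]
end

section
/- If κ > x_∞γy_{t₁,η}(T)/(1−σ₀x_∞) · (1 − γy₂∫_{t₂}^T (σ₀x_{t₁,η}(r)−1)/y_{t₁,η}(r) dr) for all (t₁, η) ∈ R, then ∂J/∂η < 0 on all of R, and hence the optimal control for the problem with cost x_∞ + κ∫σ is σ* ≡ σ₂ (no strict quarantine). -/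
/-- If κ exceeds x_∞γy(T)/(1−σ₀x_∞)·(1 − γy₂∫_{t₂}^T(σ₀x−1)/y) for all (t₁,η) ∈ R, then
∂J/∂η < 0 on all of R, and hence the optimal control is σ* ≡ σ₂ (no strict quarantine):
the cost is maximized at η = 0. -/
theorem no_strict_quarantine_optimal (γ σ₀ σ₁ σ₂ κ τ T : ℝ)
    (hγ : 0 < γ) (hσ₀ : 0 < σ₀) (h1 : 0 ≤ σ₁) (h12 : σ₁ < σ₂) (h2 : σ₂ ≤ σ₀)
    (hτ : 0 < τ) (hτT : τ < T) (hκ : 0 < κ)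
    (X Y : ℝ → ℝ → ℝ → ℝ) (xinf : ℝ → ℝ → ℝ) (J : ℝ → ℝ → ℝ)
    (hpos : ∀ t₁ η, ∀ s ∈ Set.Icc (0:ℝ) T, 0 < X t₁ η s ∧ 0 < Y t₁ η s)
    (hxinf : ∀ a b : ℝ, 0 < a → 0 < b →
      xinf a b ∈ Set.Ioo 0 (1/σ₀) ∧
      xinf a b * Real.exp (-σ₀ * xinf a b) = a * Real.exp (-σ₀ * (a + b)))
    -- cost functional
    (hJ : ∀ t₁ η, J t₁ η = xinf (X t₁ η T) (Y t₁ η T) + κ * (σ₁ * η + σ₂ * (T - η)))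
    -- κ dominates the marginal benefit of the strict quarantine on all of R
    (hκbig : ∀ t₁ η, 0 ≤ η → η ≤ τ → 0 ≤ t₁ → t₁ ≤ T - η →
      xinf (X t₁ η T) (Y t₁ η T) * γ * Y t₁ η T /
          (1 - σ₀ * xinf (X t₁ η T) (Y t₁ η T)) *
        (1 - γ * Y t₁ η (t₁ + η) *
          ∫ r in (t₁ + η)..T, (σ₀ * X t₁ η r - 1) / Y t₁ η r) < κ)
    -- formula for ∂J/∂η
    (hJder : ∀ t₁ η, 0 ≤ η → η ≤ τ → 0 ≤ t₁ → t₁ ≤ T - η →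
      HasDerivAt (fun e => J t₁ e)
        (xinf (X t₁ η T) (Y t₁ η T) * γ * (σ₂ - σ₁) * Y t₁ η T /
            (1 - σ₀ * xinf (X t₁ η T) (Y t₁ η T)) *
          (1 - γ * Y t₁ η (t₁ + η) *
            ∫ r in (t₁ + η)..T, (σ₀ * X t₁ η r - 1) / Y t₁ η r)
          - κ * (σ₂ - σ₁)) η)
    -- on the lower boundary η = 0, J is constant in t₁
    (hconst : ∀ t₁ t₁' : ℝ, J t₁ 0 = J t₁' 0) :
    ∀ t₁ η, 0 ≤ η → η ≤ τ → 0 ≤ t₁ → t₁ ≤ T - η →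
      (xinf (X t₁ η T) (Y t₁ η T) * γ * (σ₂ - σ₁) * Y t₁ η T /
            (1 - σ₀ * xinf (X t₁ η T) (Y t₁ η T)) *
          (1 - γ * Y t₁ η (t₁ + η) *
            ∫ r in (t₁ + η)..T, (σ₀ * X t₁ η r - 1) / Y t₁ η r)
          - κ * (σ₂ - σ₁) < 0) ∧
      J t₁ η ≤ J 0 0 := by
  -- the derivative is negative at every point of R
  have hneg : ∀ t₁ η, 0 ≤ η → η ≤ τ → 0 ≤ t₁ → t₁ ≤ T - η →
      xinf (X t₁ η T) (Y t₁ η T) * γ * (σ₂ - σ₁) * Y t₁ η T /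
            (1 - σ₀ * xinf (X t₁ η T) (Y t₁ η T)) *
          (1 - γ * Y t₁ η (t₁ + η) *
            ∫ r in (t₁ + η)..T, (σ₀ * X t₁ η r - 1) / Y t₁ η r)
          - κ * (σ₂ - σ₁) < 0 := by
    intro t₁ η hη0 hητ ht0 htT
    have hA := hκbig t₁ η hη0 hητ ht0 htT
    have hkey : xinf (X t₁ η T) (Y t₁ η T) * γ * (σ₂ - σ₁) * Y t₁ η T /
            (1 - σ₀ * xinf (X t₁ η T) (Y t₁ η T)) *
          (1 - γ * Y t₁ η (t₁ + η) *
            ∫ r in (t₁ + η)..T, (σ₀ * X t₁ η r - 1) / Y t₁ η r)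
          - κ * (σ₂ - σ₁)
        = (σ₂ - σ₁) *
          (xinf (X t₁ η T) (Y t₁ η T) * γ * Y t₁ η T /
              (1 - σ₀ * xinf (X t₁ η T) (Y t₁ η T)) *
            (1 - γ * Y t₁ η (t₁ + η) *
              ∫ r in (t₁ + η)..T, (σ₀ * X t₁ η r - 1) / Y t₁ η r) - κ) := by
      ring
    rw [hkey]
    exact mul_neg_of_pos_of_neg (by linarith) (by linarith)
  intro t₁ η hη0 hητ ht0 htT
  refine ⟨hneg t₁ η hη0 hητ ht0 htT, ?_⟩
  -- derivative of J t₁ on [0, η]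
  have hder : ∀ e ∈ Set.Icc (0:ℝ) η, ∃ d, HasDerivAt (fun e => J t₁ e) d e ∧ d < 0 := by
    intro e he
    obtain ⟨he0, heη⟩ := he
    have heτ : e ≤ τ := le_trans heη hητ
    have heT : t₁ ≤ T - e := by linarith
    exact ⟨_, hJder t₁ e he0 heτ ht0 heT, hneg t₁ e he0 heτ ht0 heT⟩
  have hmono : ∀ a b : ℝ, 0 ≤ a → a ≤ b → b ≤ η → J t₁ b ≤ J t₁ a := by
    intro a b ha hab hbη
    rcases eq_or_lt_of_le hab with rfl | hab
    · exact le_rfl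
    · have hanti : StrictAntiOn (fun e => J t₁ e) (Set.Icc a b) := by
        apply strictAntiOn_of_deriv_neg (convex_Icc a b)
        · intro x hx
          obtain ⟨d, hd, _⟩ := hder x ⟨le_trans ha hx.1, le_trans hx.2 hbη⟩
          exact hd.continuousAt.continuousWithinAt
        · intro x hx
          rw [interior_Icc] at hx
          obtain ⟨d, hd, hdneg⟩ :=
            hder x ⟨le_trans ha (le_of_lt hx.1), le_trans (le_of_lt hx.2) hbη⟩
          rw [hd.deriv]
          exact hdneg
      exact le_of_lt (hanti (Set.left_mem_Icc.mpr hab.le) (Set.right_mem_Icc.mpr hab.le) hab)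
  calc J t₁ η ≤ J t₁ 0 := hmono 0 η le_rfl hη0 le_rfl
    _ = J 0 0 := hconst t₁ 0
end
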